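/- The minimal number of irreducible components of a faithful complex representation of a finite group G is at most the minimal length ℓ of a chain of subgroups {e} = H_0 < H_1 < ... < H_ℓ = G such that the dual Euler totient φ̂(H_i, H_{i+1}) := ∑_{K ∈ [H_i, H_{i+1}]} μ(H_i, K)·|H_{i+1}:K| is nonzero for each i. -/

import Mathlib

open Finset
open scoped Classical

variable {G : Type} [Group G] [Fintype G]

private lemma mobB (μ : Subgroup G → Subgroup G → ℤ)
    (hμ_self : ∀ K : Subgroup G, μ K K = 1)
    (hμ_lt : ∀ K K' : Subgroup G, K < K' →
      μ K K' = -∑ L ∈ Finset.univ.filter (fun L : Subgroup G => K < L ∧ L ≤ K'), μ L K')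
    (K K' : Subgroup G) :
    ∑ L ∈ univ.filter (fun L => K ≤ L ∧ L ≤ K'), μ L K' = if K = K' then 1 else 0 := by
  by_cases h : K ≤ K'
  · rcases eq_or_lt_of_le h with rfl | hlt
    · rw [if_pos rfl]
      rw [show univ.filter (fun L => K ≤ L ∧ L ≤ K) = {K} by
        ext L; simp [Finset.mem_filter, le_antisymm_iff, and_comm, eq_comm, Finset.mem_singleton]]
      simp [hμ_self]
    · rw [if_neg (ne_of_lt hlt)]
      have hsplit : univ.filter (fun L => K ≤ L ∧ L ≤ K')
          = insert K (univ.filter (fun L => K < L ∧ L ≤ K')) := by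
        ext L
        simp only [mem_filter, mem_univ, true_and, mem_insert]
        constructor
        · rintro ⟨h1, h2⟩
          rcases eq_or_lt_of_le h1 with rfl | hh
          · exact Or.inl rfl
          · exact Or.inr ⟨hh, h2⟩
        · rintro (rfl | ⟨h1, h2⟩)
          · exact ⟨le_refl _, le_of_lt hlt⟩
          · exact ⟨le_of_lt h1, h2⟩
      rw [hsplit, Finset.sum_insert (by simp)]
      rw [hμ_lt K K' hlt]
      ring
  · rw [if_neg (by rintro rfl; exact h le_rfl)]
    rw [Finset.filter_false_of_mem (fun L _ hl => h (le_trans hl.1 hl.2)), Finset.sum_empty]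

private lemma mobA (μ : Subgroup G → Subgroup G → ℤ)
    (hμ_self : ∀ K : Subgroup G, μ K K = 1)
    (hμ_lt : ∀ K K' : Subgroup G, K < K' →
      μ K K' = -∑ L ∈ Finset.univ.filter (fun L : Subgroup G => K < L ∧ L ≤ K'), μ L K')
    (H J : Subgroup G) :
    ∑ L ∈ univ.filter (fun L => H ≤ L ∧ L ≤ J), μ H L = if H = J then 1 else 0 := by
  suffices h : ∀ n (H J : Subgroup G), (univ.filter (fun L => H ≤ L ∧ L ≤ J)).card ≤ n →
      ∑ L ∈ univ.filter (fun L => H ≤ L ∧ L ≤ J), μ H L = if H = J then 1 else 0 from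
    h _ H J le_rfl
  intro n
  induction n with
  | zero =>
    intro H J hcard
    have hempty : univ.filter (fun L => H ≤ L ∧ L ≤ J) = ∅ :=
      Finset.card_eq_zero.mp (Nat.le_zero.mp hcard)
    rw [hempty, Finset.sum_empty]
    rw [if_neg]
    rintro rfl
    have : H ∈ univ.filter (fun L => H ≤ L ∧ L ≤ H) := by simp
    rw [hempty] at this
    exact absurd this (Finset.notMem_empty H)
  | succ n ih =>
    intro H J hcard
    by_cases hHJ : H ≤ J
    · rcases eq_or_lt_of_le hHJ with rfl | hlt
      · rw [show univ.filter (fun L => H ≤ L ∧ L ≤ H) = {H} by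
          ext L; simp [le_antisymm_iff, and_comm, eq_comm]]
        simp [hμ_self]
      · rw [if_neg (ne_of_lt hlt)]
        -- the double sum
        set D : ℤ := ∑ L : Subgroup G, ∑ Y : Subgroup G,
          if H ≤ L ∧ L ≤ Y ∧ Y ≤ J then μ H L * μ Y J else 0 with hD
        have hD1 : D = μ H J := by
          rw [hD]
          have : ∀ L : Subgroup G, (∑ Y : Subgroup G,
              if H ≤ L ∧ L ≤ Y ∧ Y ≤ J then μ H L * μ Y J else 0)
              = if H ≤ L then μ H L * (if L = J then 1 else 0) else 0 := by
            intro L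
            by_cases hL : H ≤ L
            · rw [if_pos hL]
              rw [show (∑ Y : Subgroup G, if H ≤ L ∧ L ≤ Y ∧ Y ≤ J then μ H L * μ Y J else 0)
                  = ∑ Y : Subgroup G, μ H L * (if L ≤ Y ∧ Y ≤ J then μ Y J else 0) by
                apply Finset.sum_congr rfl
                intro Y _
                by_cases hY : L ≤ Y ∧ Y ≤ J
                · rw [if_pos ⟨hL, hY.1, hY.2⟩, if_pos hY]
                · rw [if_neg (fun hc => hY ⟨hc.2.1, hc.2.2⟩), if_neg hY, mul_zero]]
              rw [← Finset.mul_sum]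
              congr 1
              rw [← Finset.sum_filter]
              exact mobB μ hμ_self hμ_lt L J
            · rw [if_neg hL]
              apply Finset.sum_eq_zero
              intro Y _
              rw [if_neg (fun hc => hL hc.1)]
          rw [Finset.sum_congr rfl (fun L _ => this L)]
          rw [Finset.sum_eq_single J]
          · rw [if_pos hHJ, if_pos rfl, mul_one]
          · intro L _ hLJ
            by_cases hL : H ≤ L
            · rw [if_pos hL, if_neg hLJ, mul_zero]
            · rw [if_neg hL]
          · intro h; exact absurd (Finset.mem_univ J) h
        have hD2 : D = μ H J + (∑ L ∈ univ.filter (fun L => H ≤ L ∧ L ≤ J), μ H L) := by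
          rw [hD, Finset.sum_comm]
          have hterm : ∀ Y : Subgroup G, (∑ L : Subgroup G,
              if H ≤ L ∧ L ≤ Y ∧ Y ≤ J then μ H L * μ Y J else 0)
              = if Y ≤ J then (∑ L ∈ univ.filter (fun L => H ≤ L ∧ L ≤ Y), μ H L) * μ Y J
                else 0 := by
            intro Y
            by_cases hY : Y ≤ J
            · rw [if_pos hY, Finset.sum_filter, Finset.sum_mul]
              apply Finset.sum_congr rfl
              intro L _
              by_cases hL : H ≤ L ∧ L ≤ Y
              · rw [if_pos ⟨hL.1, hL.2, hY⟩, if_pos hL]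
              · rw [if_neg (fun hc => hL ⟨hc.1, hc.2.1⟩), if_neg hL, zero_mul]
            · rw [if_neg hY]
              apply Finset.sum_eq_zero
              intro L _
              rw [if_neg (fun hc => hY hc.2.2)]
          rw [Finset.sum_congr rfl (fun Y _ => hterm Y)]
          rw [← Finset.sum_erase_add _ _ (Finset.mem_univ J)]
          congr 1
          · -- sum over Y ≠ J equals μ H J  (only Y = H contributes)
            rw [Finset.sum_eq_single_of_mem H (Finset.mem_erase.mpr ⟨ne_of_lt hlt, Finset.mem_univ H⟩)]
            · rw [if_pos hHJ]
              have : (∑ L ∈ univ.filter (fun L => H ≤ L ∧ L ≤ H), μ H L) = 1 := by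
                rw [show univ.filter (fun L => H ≤ L ∧ L ≤ H) = {H} by
                  ext L; simp [le_antisymm_iff, and_comm, eq_comm]]
                simp [hμ_self]
              rw [this, one_mul]
            · intro Y hY hYH
              by_cases hYJ : Y ≤ J
              · rw [if_pos hYJ]
                have hYneJ : Y ≠ J := (Finset.mem_erase.mp hY).1
                have hsub : univ.filter (fun L => H ≤ L ∧ L ≤ Y)
                    ⊆ (univ.filter (fun L => H ≤ L ∧ L ≤ J)).erase J := by
                  intro L hL
                  rw [Finset.mem_filter] at hL
                  refine Finset.mem_erase.mpr ⟨?_, by simp [hL.2.1, le_trans hL.2.2 hYJ]⟩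
                  rintro rfl
                  exact hYneJ (le_antisymm hYJ hL.2.2)
                have hcard' : (univ.filter (fun L => H ≤ L ∧ L ≤ Y)).card ≤ n := by
                  have h1 := Finset.card_le_card hsub
                  have h2 : ((univ.filter (fun L => H ≤ L ∧ L ≤ J)).erase J).card
                      = (univ.filter (fun L => H ≤ L ∧ L ≤ J)).card - 1 :=
                    Finset.card_erase_of_mem (by simp [hHJ])
                  omega
                rw [ih H Y hcard', if_neg (Ne.symm hYH), zero_mul]
              · rw [if_neg hYJ]
          · rw [if_pos le_rfl, hμ_self, mul_one]
        have := hD1.symm.trans hD2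
        linarith
    · rw [if_neg (by rintro rfl; exact hHJ le_rfl)]
      rw [Finset.filter_false_of_mem (fun L _ hl => hHJ (le_trans hl.1 hl.2)), Finset.sum_empty]

private lemma mobW (μ : Subgroup G → Subgroup G → ℤ)
    (hμ_self : ∀ K : Subgroup G, μ K K = 1)
    (hμ_lt : ∀ K K' : Subgroup G, K < K' →
      μ K K' = -∑ L ∈ Finset.univ.filter (fun L : Subgroup G => K < L ∧ L ≤ K'), μ L K')
    (H J M : Subgroup G) (hM : ¬ M ≤ H) :
    ∑ L ∈ univ.filter (fun L => H ≤ L ∧ L ≤ J ∧ L ⊔ M = J), μ H L = 0 := by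
  set D : ℤ := ∑ L : Subgroup G, ∑ Y : Subgroup G,
    if H ≤ L ∧ L ≤ Y ∧ M ≤ Y ∧ Y ≤ J then μ H L * μ Y J else 0 with hD
  have hD1 : D = ∑ L ∈ univ.filter (fun L => H ≤ L ∧ L ≤ J ∧ L ⊔ M = J), μ H L := by
    rw [hD]
    have hterm : ∀ L : Subgroup G, (∑ Y : Subgroup G,
        if H ≤ L ∧ L ≤ Y ∧ M ≤ Y ∧ Y ≤ J then μ H L * μ Y J else 0)
        = if H ≤ L ∧ L ≤ J ∧ L ⊔ M = J then μ H L else 0 := by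
      intro L
      by_cases hL : H ≤ L
      · have : (∑ Y : Subgroup G, if H ≤ L ∧ L ≤ Y ∧ M ≤ Y ∧ Y ≤ J then μ H L * μ Y J else 0)
            = μ H L * ∑ Y ∈ univ.filter (fun Y => L ⊔ M ≤ Y ∧ Y ≤ J), μ Y J := by
          rw [Finset.mul_sum, Finset.sum_filter]
          apply Finset.sum_congr rfl
          intro Y _
          by_cases hY : L ⊔ M ≤ Y ∧ Y ≤ J
          · rw [if_pos ⟨hL, le_trans le_sup_left hY.1, le_trans le_sup_right hY.1, hY.2⟩,
              if_pos hY]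
          · rw [if_neg (by rintro ⟨-, h1, h2, h3⟩; exact hY ⟨sup_le h1 h2, h3⟩), if_neg hY]
        rw [this, mobB μ hμ_self hμ_lt (L ⊔ M) J]
        by_cases hc : L ⊔ M = J
        · rw [if_pos hc, mul_one, if_pos ⟨hL, le_trans le_sup_left hc.le, hc⟩]
        · rw [if_neg hc, mul_zero, if_neg (fun hcc => hc hcc.2.2)]
      · rw [if_neg (fun hc => hL hc.1)]
        apply Finset.sum_eq_zero
        intro Y _
        rw [if_neg (fun hc => hL hc.1)]
    rw [Finset.sum_congr rfl (fun L _ => hterm L), ← Finset.sum_filter]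
  have hD2 : D = 0 := by
    rw [hD, Finset.sum_comm]
    apply Finset.sum_eq_zero
    intro Y _
    by_cases hY : M ≤ Y ∧ Y ≤ J
    · have : (∑ L : Subgroup G, if H ≤ L ∧ L ≤ Y ∧ M ≤ Y ∧ Y ≤ J then μ H L * μ Y J else 0)
          = (∑ L ∈ univ.filter (fun L => H ≤ L ∧ L ≤ Y), μ H L) * μ Y J := by
        rw [Finset.sum_filter, Finset.sum_mul]
        apply Finset.sum_congr rfl
        intro L _
        by_cases hL : H ≤ L ∧ L ≤ Y
        · rw [if_pos ⟨hL.1, hL.2, hY.1, hY.2⟩, if_pos hL]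
        · rw [if_neg (fun hc => hL ⟨hc.1, hc.2.1⟩), if_neg hL, zero_mul]
      rw [this, mobA μ hμ_self hμ_lt H Y]
      rw [if_neg, zero_mul]
      rintro rfl
      exact hM hY.1
    · apply Finset.sum_eq_zero
      intro L _
      rw [if_neg (fun hc => hY ⟨hc.2.2.1, hc.2.2.2⟩)]
  rw [← hD1, hD2]


open Module CategoryTheory

noncomputable section


variable {G : Type} [Group G] [Fintype G]

/-- the subgroup of elements fixing a vector -/
private def fixSub (V : FDRep ℂ G) (v : V) : Subgroup G where
  carrier := {g | V.ρ g v = v}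
  one_mem' := by simp
  mul_mem' := by
    intro a b ha hb
    show V.ρ (a * b) v = v
    rw [map_mul, Module.End.mul_apply, hb, ha]
  inv_mem' := by
    intro a ha
    show V.ρ a⁻¹ v = v
    have : V.ρ a⁻¹ (V.ρ a v) = v := by
      rw [← Module.End.mul_apply, ← map_mul, inv_mul_cancel, map_one, Module.End.one_apply]
    rwa [ha] at this

private lemma mem_fixSub_iff (V : FDRep ℂ G) (v : V) (g : G) :
    g ∈ fixSub V v ↔ V.ρ g v = v := Iff.rfl

/-- the kernel of a representation as a subgroup -/
private def kerSub (V : FDRep ℂ G) : Subgroup G where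
  carrier := {g | V.ρ g = 1}
  one_mem' := by simp
  mul_mem' := by
    intro a b ha hb
    show V.ρ (a * b) = 1
    rw [map_mul, ha, hb, one_mul]
  inv_mem' := by
    intro a ha
    show V.ρ a⁻¹ = 1
    have : V.ρ a⁻¹ * V.ρ a = 1 := by rw [← map_mul, inv_mul_cancel, map_one]
    rwa [ha, mul_one] at this

/-- averaged equivariant projection onto an invariant submodule -/
private lemma exists_equiv_proj {V : Type} [AddCommGroup V] [Module ℂ V]
    (ρ : Representation ℂ G V) (p : Submodule ℂ V) (hp : ∀ g : G, ∀ v ∈ p, ρ g v ∈ p) :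
    ∃ T : V →ₗ[ℂ] V, (∀ g : G, T ∘ₗ ρ g = ρ g ∘ₗ T) ∧ (∀ v, T v ∈ p) ∧ (∀ v ∈ p, T v = v) := by
  obtain ⟨q0, hq0⟩ := Submodule.exists_isCompl p
  set π : V →ₗ[ℂ] V := p.subtype ∘ₗ (p.projectionOnto q0 hq0) with hπ
  have hπ1 : ∀ v, π v ∈ p := fun v => (p.projectionOnto q0 hq0 v).2
  have hπ2 : ∀ v ∈ p, π v = v := by
    intro v hv
    show (p.subtype) (p.projectionOnto q0 hq0 v) = v
    rw [show v = ((⟨v, hv⟩ : p) : V) from rfl, Submodule.projectionOnto_apply_left hq0]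
    rfl
  have hcard : (Fintype.card G : ℂ) ≠ 0 := Nat.cast_ne_zero.mpr Fintype.card_ne_zero
  set S : V →ₗ[ℂ] V := ∑ g : G, (ρ g) ∘ₗ π ∘ₗ (ρ g⁻¹) with hS
  refine ⟨(Fintype.card G : ℂ)⁻¹ • S, ?_, ?_, ?_⟩
  · intro h
    have hcomp : ∀ v, S ((ρ h) v) = (ρ h) (S v) := by
      intro v
      rw [hS, LinearMap.sum_apply, LinearMap.sum_apply, map_sum]
      apply Fintype.sum_equiv (Equiv.mulLeft h⁻¹)
      intro g
      simp only [LinearMap.comp_apply, Equiv.coe_mulLeft]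
      have e1 : (ρ g⁻¹) ((ρ h) v) = (ρ (h⁻¹ * g)⁻¹) v := by
        rw [← Module.End.mul_apply, ← map_mul]
        congr 1
        group
      have e2 : (ρ h) ((ρ (h⁻¹ * g)) (π ((ρ (h⁻¹ * g)⁻¹) v)))
          = (ρ g) (π ((ρ (h⁻¹ * g)⁻¹) v)) := by
        rw [← Module.End.mul_apply, ← map_mul]
        congr 1
        group
      rw [e1, e2]
    ext v
    simp only [LinearMap.comp_apply, LinearMap.smul_apply, map_smul]
    rw [hcomp]
  · intro v
    simp only [LinearMap.smul_apply]
    refine Submodule.smul_mem _ _ ?_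
    rw [hS]
    rw [LinearMap.sum_apply]
    refine Submodule.sum_mem _ (fun g _ => ?_)
    exact hp g _ (hπ1 _)
  · intro v hv
    have : ∀ g : G, ((ρ g) ∘ₗ π ∘ₗ (ρ g⁻¹)) v = v := by
      intro g
      simp only [LinearMap.comp_apply]
      rw [hπ2 _ (hp g⁻¹ v hv), ← Module.End.mul_apply, ← map_mul, mul_inv_cancel, map_one,
        Module.End.one_apply]
    simp only [LinearMap.smul_apply, hS, LinearMap.sum_apply, this]
    rw [Finset.sum_const, Finset.card_univ, ← Nat.cast_smul_eq_nsmul ℂ, smul_smul,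
      inv_mul_cancel₀ hcard, one_smul]


private lemma trace_split {V : Type} [AddCommGroup V] [Module ℂ V] [FiniteDimensional ℂ V]
    (f : V →ₗ[ℂ] V) (p q : Submodule ℂ V) (hc : IsCompl p q)
    (hp : ∀ v ∈ p, f v ∈ p) (hq : ∀ v ∈ q, f v ∈ q) :
    LinearMap.trace ℂ V f
      = LinearMap.trace ℂ p (f.restrict hp) + LinearMap.trace ℂ q (f.restrict hq) := by
  set e := p.prodEquivOfIsCompl q hc with he
  have hfe : ∀ z : ↥p × ↥q, f (e z) = e (((f.restrict hp).prodMap (f.restrict hq)) z) := by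
    rintro ⟨x, y⟩
    have h1 : e (x, y) = (x : V) + (y : V) := by
      rw [he]; simp [Submodule.coe_prodEquivOfIsCompl]
    have h2 : e ((f.restrict hp) x, (f.restrict hq) y) = f (x : V) + f (y : V) := by
      rw [he]; simp [Submodule.coe_prodEquivOfIsCompl]
    simpa [h1, map_add] using h2.symm
  have hconj : e.conj ((f.restrict hp).prodMap (f.restrict hq)) = f := by
    ext v
    rw [LinearEquiv.conj_apply]
    show e (((f.restrict hp).prodMap (f.restrict hq)) (e.symm v)) = f v
    rw [← hfe (e.symm v), LinearEquiv.apply_symm_apply]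
  have htr := LinearMap.trace_conj' ((f.restrict hp).prodMap (f.restrict hq)) e
  rw [hconj] at htr
  rw [htr, LinearMap.trace_prodMap']

/-- restriction of a representation to an invariant submodule, as an FDRep -/
private def subRep (V : FDRep ℂ G) (p : Submodule ℂ V)
    (hp : ∀ g : G, ∀ v ∈ p, V.ρ g v ∈ p) : FDRep ℂ G :=
  FDRep.of
    ({ toFun := fun g => (V.ρ g).restrict (hp g)
       map_one' := by
         ext x
         simp [LinearMap.restrict_coe_apply]
       map_mul' := by
         intro a b
         ext x
         simp [LinearMap.restrict_coe_apply, Module.End.mul_apply] } : Representation ℂ G p)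

private lemma subRep_char (V : FDRep ℂ G) (p : Submodule ℂ V)
    (hp : ∀ g : G, ∀ v ∈ p, V.ρ g v ∈ p) (g : G) :
    (subRep V p hp).character g = LinearMap.trace ℂ p ((V.ρ g).restrict (hp g)) := rfl


private theorem fdrep_hom_comm_apply {A B : FDRep ℂ G} (f : A ⟶ B) (g : G) (x : A) :
    f.hom (A.ρ g x) = B.ρ g (f.hom x) :=
  LinearMap.ext_iff.1 (congrArg (fun h => h.hom.hom) (f.comm g)) x

private lemma zero_char (V : FDRep ℂ G) (h : finrank ℂ V = 0) (g : G) :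
    V.character g = 0 := by
  haveI : Subsingleton V := by
    have := Module.finrank_zero_iff (R := ℂ) (M := V)
    exact this.mp h
  have : V.ρ g = 0 := Subsingleton.elim _ _
  show LinearMap.trace ℂ V (V.ρ g) = 0
  rw [this, map_zero]

private lemma exists_decomp (V : FDRep ℂ G) :
    ∃ ws : List (FDRep ℂ G), (∀ w ∈ ws, CategoryTheory.Simple w) ∧
      ∀ g : G, V.character g = (ws.map (fun w => w.character g)).sum := by
  suffices h : ∀ (n : ℕ) (V : FDRep ℂ G), finrank ℂ V ≤ n →
      ∃ ws : List (FDRep ℂ G), (∀ w ∈ ws, CategoryTheory.Simple w) ∧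
        ∀ g : G, V.character g = (ws.map (fun w => w.character g)).sum from h _ V le_rfl
  intro n
  induction n with
  | zero =>
    intro V hV
    exact ⟨[], by simp, fun g => by simpa using zero_char V (Nat.le_zero.mp hV) g⟩
  | succ n ih =>
    intro V hV
    by_cases h0 : finrank ℂ V = 0
    · exact ⟨[], by simp, fun g => by simpa using zero_char V h0 g⟩
    by_cases hex : ∃ p : Submodule ℂ V, (∀ g : G, ∀ v ∈ p, V.ρ g v ∈ p) ∧ p ≠ ⊥ ∧ p ≠ ⊤
    · obtain ⟨p, hpinv, hpbot, hptop⟩ := hex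
      obtain ⟨T, hTcomm, hTmem, hTid⟩ := exists_equiv_proj V.ρ p hpinv
      set q := LinearMap.ker T with hqdef
      have hcompl : IsCompl p q := by
        have h := LinearMap.isCompl_of_proj
          (f := T.codRestrict p hTmem) (fun x => Subtype.ext (hTid x x.2))
        rwa [LinearMap.ker_codRestrict] at h
      have hqinv : ∀ g : G, ∀ v ∈ q, V.ρ g v ∈ q := by
        intro g v hv
        have h1 : T (V.ρ g v) = V.ρ g (T v) := LinearMap.ext_iff.1 (hTcomm g) v
        have hv0 : T v = 0 := hv
        show T (V.ρ g v) = 0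
        rw [h1, hv0, map_zero]
      have hfp : finrank ℂ (subRep V p hpinv) ≤ n := by
        have h1 : finrank ℂ p < finrank ℂ V :=
          Submodule.finrank_lt hptop
        have h2 : finrank ℂ (subRep V p hpinv) = finrank ℂ p := rfl
        omega
      have hqtop : q ≠ ⊤ := by
        intro h
        rw [h] at hcompl
        exact hpbot (disjoint_top.mp hcompl.disjoint)
      have hfq : finrank ℂ (subRep V q hqinv) ≤ n := by
        have h1 : finrank ℂ q < finrank ℂ V :=
          Submodule.finrank_lt hqtop
        have h2 : finrank ℂ (subRep V q hqinv) = finrank ℂ q := rfl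
        omega
      obtain ⟨ws1, hs1, hc1⟩ := ih (subRep V p hpinv) hfp
      obtain ⟨ws2, hs2, hc2⟩ := ih (subRep V q hqinv) hfq
      refine ⟨ws1 ++ ws2, ?_, ?_⟩
      · intro w hw
        rcases List.mem_append.mp hw with h | h
        · exact hs1 w h
        · exact hs2 w h
      · intro g
        have hsplit : V.character g
            = (subRep V p hpinv).character g + (subRep V q hqinv).character g := by
          rw [subRep_char, subRep_char]
          exact trace_split (V.ρ g) p q hcompl (fun v hv => hpinv g v hv)
            (fun v hv => hqinv g v hv)
        rw [hsplit, hc1 g, hc2 g, List.map_append, List.sum_append]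
    · -- V is simple
      have hall : ∀ p : Submodule ℂ V, (∀ g : G, ∀ v ∈ p, V.ρ g v ∈ p) → p = ⊥ ∨ p = ⊤ := by
        intro p hp
        by_contra hc
        push_neg at hc
        exact hex ⟨p, hp, hc.1, hc.2⟩
      have hsimple : CategoryTheory.Simple V := by
        constructor
        intro Y f hmono
        constructor
        · intro hiso hf0
          have hid : 𝟙 V = 0 := by
            have h2 : inv f ≫ f = inv f ≫ 0 := congrArg (fun gg => inv f ≫ gg) hf0
            rw [← CategoryTheory.IsIso.inv_hom_id f, h2]
            simp
          apply h0
          apply Module.finrank_zero_iff.mpr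
          constructor
          intro a b
          have ha := LinearMap.ext_iff.1 (congrArg (fun h => h.hom.hom.hom) hid) a
          have hb := LinearMap.ext_iff.1 (congrArg (fun h => h.hom.hom.hom) hid) b
          simp only [Action.id_hom, Action.zero_hom] at ha hb
          change a = b
          calc a = 0 := ha
            _ = b := hb.symm
        · intro hf0
          set φ : (Y : Type) →ₗ[ℂ] V := f.hom.hom.hom with hφ
          have hφcomm : ∀ g : G, ∀ y : Y, φ (Y.ρ g y) = V.ρ g (φ y) :=
            fun g y => fdrep_hom_comm_apply f g y
          -- φ is surjective
          have hrinv : ∀ g : G, ∀ v ∈ LinearMap.range φ, V.ρ g v ∈ LinearMap.range φ := by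
            rintro g v ⟨y, rfl⟩
            exact ⟨Y.ρ g y, hφcomm g y⟩
          have hrange : LinearMap.range φ = ⊤ := by
            rcases hall _ hrinv with h | h
            · exfalso
              apply hf0
              apply Action.Hom.ext
              apply FGModuleCat.hom_ext
              exact LinearMap.range_eq_bot.mp h
            · exact h
          -- φ is injective
          have hkinv : ∀ g : G, ∀ y ∈ LinearMap.ker φ, Y.ρ g y ∈ LinearMap.ker φ := by
            intro g y hy
            have hy0 : φ y = 0 := hy
            show φ (Y.ρ g y) = 0
            rw [hφcomm g y, hy0, map_zero]
          obtain ⟨T, hTcomm, hTmem, hTid⟩ := exists_equiv_proj Y.ρ (LinearMap.ker φ) hkinv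
          let e : Y ⟶ Y :=
            ⟨FGModuleCat.ofHom T, fun g => by
              ext y
              exact congrFun (congrArg (fun h => h.toFun) (hTcomm g)) y⟩
          have hef : e ≫ f = 0 := by
            apply Action.Hom.ext
            ext y
            change φ (T y) = 0
            exact hTmem y
          have he0 : e = 0 := (CategoryTheory.cancel_mono f).mp (by rw [hef]; simp)
          have hker : ∀ y : (Y : Type), φ y = 0 → y = 0 := by
            intro y hy
            have h1 : T y = y := hTid y hy
            have h3 := congrArg (fun h => h.hom.hom.hom) he0
            have h4 : T y = (0 : Y ⟶ Y).hom.hom.hom y :=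
              LinearMap.ext_iff.1 h3 y
            rw [← h1, h4]
            rfl
          have hinj : Function.Injective φ := by
            rw [← LinearMap.ker_eq_bot]
            apply (Submodule.eq_bot_iff _).mpr
            exact fun y hy => hker y hy
          have hsurj : Function.Surjective φ := LinearMap.range_eq_top.mp hrange
          set E := LinearEquiv.ofBijective φ ⟨hinj, hsurj⟩ with hE
          let ginv : V ⟶ Y :=
            ⟨FGModuleCat.ofHom (E.symm : V →ₗ[ℂ] Y), by
              intro g
              ext v
              change E.symm (V.ρ g v) = Y.ρ g (E.symm v)
              apply hinj
              have hh1 : φ (E.symm (V.ρ g v)) = V.ρ g v := E.apply_symm_apply _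
              have hh2 : φ (Y.ρ g (E.symm v)) = V.ρ g (φ (E.symm v)) := hφcomm g _
              have hh3 : φ (E.symm v) = v := E.apply_symm_apply _
              rw [hh1, hh2, hh3]⟩
          refine ⟨ginv, ?_, ?_⟩
          · apply Action.Hom.ext
            ext y
            change E.symm (φ y) = y
            exact E.symm_apply_apply y
          · apply Action.Hom.ext
            ext v
            change φ (E.symm v) = v
            exact E.apply_symm_apply v
      refine ⟨[V], ?_, fun g => by simp⟩
      intro w hw
      rw [List.mem_singleton] at hw
      rw [hw]
      exact hsimple



variable {G : Type} [Group G] [Fintype G]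

private def dC (V : FDRep ℂ G) (L : Subgroup G) : ℕ :=
  finrank ℂ (Representation.invariants (V.ρ.comp L.subtype))

private lemma charSum (V : FDRep ℂ G) (L : Subgroup G) :
    ∑ l : ↥L, V.character (l : G) = (Nat.card ↥L : ℂ) * (dC V L : ℂ) := by
  haveI : Invertible ((Fintype.card ↥L : ℂ)) :=
    invertibleOfNonzero (Nat.cast_ne_zero.mpr Fintype.card_ne_zero)
  have h := FDRep.average_char_eq_finrank_invariants (FDRep.of (V.ρ.comp L.subtype))
  have hchar : ∀ l : ↥L, (FDRep.of (V.ρ.comp L.subtype)).character l = V.character (l : G) :=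
    fun l => rfl
  rw [Finset.sum_congr rfl (fun l _ => hchar l)] at h
  have h2 := congrArg (fun z : ℂ => (Fintype.card ↥L : ℂ) * z) h
  simp only [smul_eq_mul, ← mul_assoc, mul_invOf_self, one_mul] at h2
  show _ = _ * ((finrank ℂ (Representation.invariants (FDRep.of (V.ρ.comp L.subtype)).ρ) : ℕ) : ℂ)
  rw [← h, ← mul_assoc, mul_inv_cancel₀ (Nat.cast_ne_zero.mpr Nat.card_pos.ne'), one_mul]

private lemma card_ne_zero' (L : Subgroup G) : (Nat.card ↥L : ℂ) ≠ 0 := by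
  have : Nat.card ↥L ≠ 0 := Nat.card_pos.ne'
  exact_mod_cast this

private def regRep (G : Type) [Group G] [Fintype G] : FDRep ℂ G :=
  FDRep.of (Representation.ofMulAction ℂ G G)

private lemma regRep_char (g : G) :
    (regRep G).character g = if g = 1 then (Fintype.card G : ℂ) else 0 := by
  show LinearMap.trace ℂ (MonoidAlgebra ℂ G) ((Representation.ofMulAction ℂ G G) g) = _
  rw [LinearMap.trace_eq_matrix_trace ℂ (MonoidAlgebra.basis G ℂ), Matrix.trace]
  have hdiag : ∀ x : G,
      ((LinearMap.toMatrix (MonoidAlgebra.basis G ℂ) (MonoidAlgebra.basis G ℂ))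
        ((Representation.ofMulAction ℂ G G) g)).diag x = if g = 1 then 1 else 0 := by
    intro x
    rw [Matrix.diag_apply, LinearMap.toMatrix_apply]
    rw [MonoidAlgebra.basis_apply]
    rw [Representation.ofMulAction_single]
    simp only [MonoidAlgebra.basis, Module.Basis.coe_ofRepr, MonoidAlgebra.coeffLinearEquiv_apply, MonoidAlgebra.coeff_single, Finsupp.single_apply, smul_eq_mul]
    by_cases hg : g = 1
    · rw [if_pos (by rw [hg, one_mul]), if_pos hg]
    · rw [if_neg (fun h => hg (by
        have : g * x = 1 * x := by rw [h, one_mul]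
        exact mul_right_cancel this)), if_neg hg]
  rw [Finset.sum_congr rfl (fun x _ => hdiag x)]
  by_cases hg : g = 1
  · simp [hg, Finset.card_univ]
  · simp [hg]

private lemma regRep_charSum (L : Subgroup G) :
    (Nat.card ↥L : ℂ) * (dC (regRep G) L : ℂ) = (Fintype.card G : ℂ) := by
  have h1 : ∑ l : ↥L, (regRep G).character (l : G)
      = ∑ l : ↥L, (if (l : G) = 1 then (Fintype.card G : ℂ) else 0) :=
    Finset.sum_congr rfl (fun l _ => regRep_char _)
  rw [← charSum, h1, Finset.sum_eq_single (⟨1, L.one_mem⟩ : ↥L)]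
  · rw [if_pos rfl]
  · intro l _ hl
    rw [if_neg (fun h => hl (Subtype.ext h))]
  · intro h
    exact absurd (Finset.mem_univ _) h

private lemma relindex_card (L K : Subgroup G) (h : L ≤ K) :
    (L.relIndex K : ℂ) * (Nat.card ↥L : ℂ) = (Nat.card ↥K : ℂ) := by
  have h1 : (L.subgroupOf K).index * Nat.card ↥(L.subgroupOf K) = Nat.card ↥K :=
    Subgroup.index_mul_card _
  have h2 : Nat.card ↥(L.subgroupOf K) = Nat.card ↥L :=
    Nat.card_congr (Subgroup.subgroupOfEquivOfLe h).toEquiv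
  rw [h2] at h1
  rw [Subgroup.relIndex]
  exact_mod_cast congrArg (fun n : ℕ => (n : ℂ)) h1

private def fixSub' (V : FDRep ℂ G) (v : V) : Subgroup G where
  carrier := {g | V.ρ g v = v}
  one_mem' := by simp
  mul_mem' := by
    intro a b ha hb
    show V.ρ (a * b) v = v
    rw [map_mul, Module.End.mul_apply, hb, ha]
  inv_mem' := by
    intro a ha
    show V.ρ a⁻¹ v = v
    have : V.ρ a⁻¹ (V.ρ a v) = v := by
      rw [← Module.End.mul_apply, ← map_mul, inv_mul_cancel, map_one, Module.End.one_apply]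
    rwa [ha] at this

private def kerSub' (V : FDRep ℂ G) : Subgroup G where
  carrier := {g | V.ρ g = 1}
  one_mem' := by simp
  mul_mem' := by
    intro a b ha hb
    show V.ρ (a * b) = 1
    rw [map_mul, ha, hb, one_mul]
  inv_mem' := by
    intro a ha
    show V.ρ a⁻¹ = 1
    have : V.ρ a⁻¹ * V.ρ a = 1 := by rw [← map_mul, inv_mul_cancel, map_one]
    rwa [ha, mul_one] at this

private lemma mem_inv_iff (V : FDRep ℂ G) (N : Subgroup G) (v : V) :
    v ∈ Representation.invariants (V.ρ.comp N.subtype) ↔ N ≤ fixSub' V v := by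
  rw [Representation.mem_invariants]
  constructor
  · intro h g hg
    exact h ⟨g, hg⟩
  · intro h x
    exact h x.2

private lemma dC_sup_eq (V : FDRep ℂ G) (L M : Subgroup G) (hM : M ≤ kerSub' V) :
    dC V (L ⊔ M) = dC V L := by
  have hinv : Representation.invariants (V.ρ.comp (L ⊔ M).subtype)
      = Representation.invariants (V.ρ.comp L.subtype) := by
    ext v
    rw [mem_inv_iff, mem_inv_iff, sup_le_iff]
    have hMfix : M ≤ fixSub' V v := by
      intro g hg
      have h1 : V.ρ g = 1 := hM hg
      show V.ρ g v = v
      rw [h1, Module.End.one_apply]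
    exact and_iff_left hMfix
  unfold dC
  rw [hinv]

private lemma list_sum_finset_sum {α : Type*} {β : Type*} (ws : List α) (s : Finset β) (f : α → β → ℂ) :
    (ws.map (fun w => ∑ L ∈ s, f w L)).sum = ∑ L ∈ s, (ws.map (fun w => f w L)).sum := by
  induction ws with
  | nil => simp
  | cons a t iht => simp [iht, Finset.sum_add_distrib]

private lemma list_sum_mul_left {α : Type*} (ws : List α) (c : ℂ) (f : α → ℂ) :
    (ws.map (fun w => c * f w)).sum = c * (ws.map f).sum := by
  induction ws with
  | nil => simp
  | cons a t iht => simp [iht, mul_add]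

private lemma nat_cross (Q : ℕ → Prop) :
    ∀ n : ℕ, Q 0 → ¬ Q n → ∃ m, m < n ∧ Q m ∧ ¬ Q (m + 1) := by
  intro n
  induction n with
  | zero => intro h0 h1; exact absurd h0 h1
  | succ n ihn =>
    intro h0 h1
    by_cases h : Q n
    · exact ⟨n, Nat.lt_succ_self n, h, h1⟩
    · obtain ⟨m, hm, h2, h3⟩ := ihn h0 h
      exact ⟨m, hm.trans (Nat.lt_succ_self n), h2, h3⟩


end

open scoped Classical in
/-- The minimal number of irreducible components of a faithful complex
representation of a finite group `G` is at most the minimal length `ℓ` of a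
chain `1 = H₀ < H₁ < ... < H_ℓ = G` with each dual Euler totient
`φ̂(Hᵢ, Hᵢ₊₁) = ∑_{K ∈ [Hᵢ,Hᵢ₊₁]} μ(Hᵢ,K)·|Hᵢ₊₁:K|` nonzero: for any such
chain there is a faithful representation which is a direct sum of at most `ℓ`
irreducibles. -/
theorem stmt18 {G : Type} [Group G] [Fintype G]
    (μ : Subgroup G → Subgroup G → ℤ)
    (hμ_self : ∀ K : Subgroup G, μ K K = 1)
    (hμ_lt : ∀ K K' : Subgroup G, K < K' →
      μ K K' = -∑ L ∈ Finset.univ.filter (fun L : Subgroup G => K < L ∧ L ≤ K'), μ L K')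
    (ℓ : ℕ) (H : Fin (ℓ + 1) → Subgroup G)
    (h0 : H 0 = ⊥) (hlast : H (Fin.last ℓ) = ⊤)
    (hchain : ∀ i : Fin ℓ, H i.castSucc < H i.succ)
    (hphi : ∀ i : Fin ℓ,
      (∑ K ∈ Finset.univ.filter
          (fun K : Subgroup G => H i.castSucc ≤ K ∧ K ≤ H i.succ),
        μ (H i.castSucc) K * (K.relIndex (H i.succ) : ℤ)) ≠ 0) :
    ∃ k : ℕ, k ≤ ℓ ∧ ∃ V : Fin k → FDRep ℂ G,
      (∀ i, CategoryTheory.Simple (V i)) ∧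
      (∀ g : G, (∀ i, (V i).ρ g = 1) → g = 1) := by
  obtain ⟨ws, hws, hwchar⟩ := exists_decomp (regRep G)
  have hcardG : (Fintype.card G : ℂ) ≠ 0 := Nat.cast_ne_zero.mpr Fintype.card_ne_zero
  -- additivity of the invariant dimensions over the list of simple summands
  have hdCadd : ∀ L : Subgroup G,
      (dC (regRep G) L : ℂ) = (ws.map (fun w => (dC w L : ℂ))).sum := by
    intro L
    apply mul_left_cancel₀ (card_ne_zero' L)
    rw [← charSum]
    have h1 : ∑ l : ↥L, (regRep G).character (l : G)
        = ∑ l : ↥L, (ws.map (fun w => w.character (l : G))).sum :=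
      Finset.sum_congr rfl (fun l _ => hwchar _)
    rw [h1, ← list_sum_finset_sum ws (Finset.univ : Finset ↥L)
      (fun w l => w.character (l : G))]
    have h2 : ws.map (fun w => ∑ l : ↥L, w.character (l : G))
        = ws.map (fun w => (Nat.card ↥L : ℂ) * (dC w L : ℂ)) :=
      List.map_congr_left (fun w _ => charSum w L)
    rw [h2, list_sum_mul_left]
  -- selection of one simple summand for each step of the chain
  have hsel : ∀ i : Fin ℓ, ∃ w : FDRep ℂ G, CategoryTheory.Simple w ∧
      (∑ L ∈ Finset.univ.filter
          (fun L : Subgroup G => H i.castSucc ≤ L ∧ L ≤ H i.succ),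
        (μ (H i.castSucc) L : ℂ) * (dC w L : ℂ)) ≠ 0 := by
    intro i
    set s := Finset.univ.filter
      (fun L : Subgroup G => H i.castSucc ≤ L ∧ L ≤ H i.succ) with hs
    -- the corresponding sum for the regular representation is nonzero
    have hterm : ∀ L ∈ s, (μ (H i.castSucc) L : ℂ) * (dC (regRep G) L : ℂ)
          * (Nat.card ↥(H i.succ) : ℂ)
        = (μ (H i.castSucc) L : ℂ) * (L.relIndex (H i.succ) : ℂ) * (Fintype.card G : ℂ) := by
      intro L hL
      have hLK : L ≤ H i.succ := (Finset.mem_filter.mp hL).2.2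
      have e1 := regRep_charSum (G := G) L
      have e2 := relindex_card L (H i.succ) hLK
      apply mul_left_cancel₀ (card_ne_zero' L)
      linear_combination (μ (H i.castSucc) L : ℂ) * (Nat.card ↥(H i.succ) : ℂ) * e1
        - (μ (H i.castSucc) L : ℂ) * (Fintype.card G : ℂ) * e2
    have hphiC : (((∑ K ∈ s, μ (H i.castSucc) K * (K.relIndex (H i.succ) : ℤ)) : ℤ) : ℂ) ≠ 0 :=
      Int.cast_ne_zero.mpr (hphi i)
    have hS1 : (∑ L ∈ s, (μ (H i.castSucc) L : ℂ) * (dC (regRep G) L : ℂ)) ≠ 0 := by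
      intro hzero
      apply hphiC
      have hc : (∑ L ∈ s, (μ (H i.castSucc) L : ℂ) * (dC (regRep G) L : ℂ))
          * (Nat.card ↥(H i.succ) : ℂ)
          = (((∑ K ∈ s, μ (H i.castSucc) K * (K.relIndex (H i.succ) : ℤ)) : ℤ) : ℂ)
            * (Fintype.card G : ℂ) := by
        rw [Finset.sum_mul, Finset.sum_congr rfl hterm]
        push_cast
        rw [Finset.sum_mul]
      rw [hzero, zero_mul] at hc
      exact (mul_eq_zero.mp hc.symm).resolve_right hcardG
    have hEq : (∑ L ∈ s, (μ (H i.castSucc) L : ℂ) * (dC (regRep G) L : ℂ))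
        = (ws.map (fun w => ∑ L ∈ s, (μ (H i.castSucc) L : ℂ) * (dC w L : ℂ))).sum := by
      rw [list_sum_finset_sum]
      apply Finset.sum_congr rfl
      intro L _
      rw [hdCadd L, ← list_sum_mul_left]
    rw [hEq] at hS1
    by_contra hall
    push_neg at hall
    apply hS1
    apply List.sum_eq_zero
    intro x hx
    rw [List.mem_map] at hx
    obtain ⟨w, hw, rfl⟩ := hx
    exact hall w (hws w hw)
  choose U hU1 hU2 using hsel
  refine ⟨ℓ, le_rfl, U, hU1, ?_⟩
  intro g hg
  by_contra hg1
  set N : Subgroup G := ⨅ i : Fin ℓ, kerSub' (U i) with hN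
  have hgN : g ∈ N := Subgroup.mem_iInf.mpr (fun i => hg i)
  have hNbot : N ≠ ⊥ := by
    intro h
    rw [h] at hgN
    exact hg1 (Subgroup.mem_bot.mp hgN)
  have hQ0 : N ⊓ H ⟨min 0 ℓ, by omega⟩ = ⊥ := by
    have he : (⟨min 0 ℓ, by omega⟩ : Fin (ℓ + 1)) = 0 := by
      apply Fin.ext
      simp
    rw [he, h0, inf_bot_eq]
  have hQl : ¬ (N ⊓ H ⟨min ℓ ℓ, by omega⟩ = ⊥) := by
    have he : (⟨min ℓ ℓ, by omega⟩ : Fin (ℓ + 1)) = Fin.last ℓ := by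
      apply Fin.ext
      simp
    rw [he, hlast, inf_top_eq]
    exact hNbot
  obtain ⟨m, hmlt, hQm, hQm1⟩ :=
    nat_cross (fun m => N ⊓ H ⟨min m ℓ, by omega⟩ = ⊥) ℓ hQ0 hQl
  set i : Fin ℓ := ⟨m, hmlt⟩ with hi
  have hic : (⟨min m ℓ, by omega⟩ : Fin (ℓ + 1)) = i.castSucc := by
    apply Fin.ext
    simp [hi]
    omega
  have his : (⟨min (m + 1) ℓ, by omega⟩ : Fin (ℓ + 1)) = i.succ := by
    apply Fin.ext
    simp [hi]
    omega
  rw [hic] at hQm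
  rw [his] at hQm1
  set M : Subgroup G := N ⊓ H i.succ with hM
  have hMker : M ≤ kerSub' (U i) := le_trans inf_le_left (iInf_le _ i)
  have hMK : M ≤ H i.succ := inf_le_right
  have hMH : ¬ M ≤ H i.castSucc := by
    intro h
    exact hQm1 (le_bot_iff.mp (hQm ▸ le_inf inf_le_left h))
  apply hU2 i
  have hrw : ∀ L ∈ Finset.univ.filter
      (fun L : Subgroup G => H i.castSucc ≤ L ∧ L ≤ H i.succ),
      (μ (H i.castSucc) L : ℂ) * (dC (U i) L : ℂ)
        = (μ (H i.castSucc) L : ℂ) * (dC (U i) (L ⊔ M) : ℂ) := by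
    intro L _
    rw [dC_sup_eq (U i) L M hMker]
  rw [Finset.sum_congr rfl hrw]
  rw [← Finset.sum_fiberwise_of_maps_to (g := fun L => L ⊔ M)
    (t := (Finset.univ : Finset (Subgroup G))) (fun L _ => Finset.mem_univ _)]
  apply Finset.sum_eq_zero
  intro J _
  have hrw2 : ∀ L ∈ (Finset.univ.filter
      (fun L : Subgroup G => H i.castSucc ≤ L ∧ L ≤ H i.succ)).filter
        (fun L => L ⊔ M = J),
      (μ (H i.castSucc) L : ℂ) * (dC (U i) (L ⊔ M) : ℂ)
        = (μ (H i.castSucc) L : ℂ) * (dC (U i) J : ℂ) := by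
    intro L hL
    rw [(Finset.mem_filter.mp hL).2]
  rw [Finset.sum_congr rfl hrw2, ← Finset.sum_mul]
  rcases Finset.eq_empty_or_nonempty ((Finset.univ.filter
      (fun L : Subgroup G => H i.castSucc ≤ L ∧ L ≤ H i.succ)).filter
        (fun L => L ⊔ M = J)) with he | hne
  · rw [he, Finset.sum_empty, zero_mul]
  · obtain ⟨L0, hL0⟩ := hne
    have h1 := Finset.mem_filter.mp hL0
    have h2 := Finset.mem_filter.mp h1.1
    have hJK : J ≤ H i.succ := h1.2 ▸ sup_le h2.2.2 hMK
    have hset : (Finset.univ.filter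
        (fun L : Subgroup G => H i.castSucc ≤ L ∧ L ≤ H i.succ)).filter
          (fun L => L ⊔ M = J)
        = Finset.univ.filter
          (fun L : Subgroup G => H i.castSucc ≤ L ∧ L ≤ J ∧ L ⊔ M = J) := by
      ext L
      simp only [Finset.mem_filter, Finset.mem_univ, true_and]
      constructor
      · rintro ⟨⟨ha, hb⟩, hc⟩
        exact ⟨ha, hc ▸ le_sup_left, hc⟩
      · rintro ⟨ha, hb, hc⟩
        exact ⟨⟨ha, le_trans hb hJK⟩, hc⟩
    rw [hset]
    have hcast : (∑ L ∈ Finset.univ.filter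
        (fun L : Subgroup G => H i.castSucc ≤ L ∧ L ≤ J ∧ L ⊔ M = J),
          (μ (H i.castSucc) L : ℂ))
        = ((∑ L ∈ Finset.univ.filter
            (fun L : Subgroup G => H i.castSucc ≤ L ∧ L ≤ J ∧ L ⊔ M = J),
          μ (H i.castSucc) L : ℤ) : ℂ) := by
      push_cast
      rfl
    rw [hcast, mobW μ hμ_self hμ_lt (H i.castSucc) J M hMH]
    simp
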